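/- For p > 1, the function F(t) = (t^p + 1)·(p(t-1)/(t^p-1))² (extended by continuity where t^p = 1) is not non-decreasing on (0,∞); in particular if p > 1 then the right-derivative behavior near 0 forces F to be decreasing somewhere on (0,∞). -/
import Mathlib


/-- For `p > 1`, the function `F(t) = (t^p + 1)(p(t-1)/(t^p-1))²` (with `F(1) = 2` by continuity)
is not non-decreasing on `(0,∞)`. -/
theorem F_not_monotone (p : ℝ) (hp : 1 < p) :
    ¬ MonotoneOn (fun t : ℝ => if t = 1 then 2 else
      (t ^ p + 1) * (p * (t - 1) / (t ^ p - 1)) ^ 2) (Set.Ioi (0:ℝ)) := by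
  intro h
  set f : ℝ → ℝ := fun t => if t = 1 then 2 else
      (t ^ p + 1) * (p * (t - 1) / (t ^ p - 1)) ^ 2 with hf
  have hp0 : (0:ℝ) < p := by linarith
  -- the limit of f at 0 from the right is p²
  have hrpow : ContinuousAt (fun x : ℝ => x ^ p) 0 :=
    Real.continuousAt_rpow_const 0 p (Or.inr hp0.le)
  have h0p : (0:ℝ) ^ p = 0 := Real.zero_rpow (ne_of_gt hp0)
  have hg : ContinuousAt (fun t : ℝ => (t ^ p + 1) * (p * (t - 1) / (t ^ p - 1)) ^ 2) 0 := by
    apply ContinuousAt.mul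
    · exact hrpow.add continuousAt_const
    · apply ContinuousAt.pow
      apply ContinuousAt.div
      · exact continuousAt_const.mul (continuousAt_id.sub continuousAt_const)
      · exact hrpow.sub continuousAt_const
      · simp [h0p]
  have htend : Filter.Tendsto f (nhdsWithin 0 (Set.Ioi 0)) (nhds (p ^ 2)) := by
    have hg' : Filter.Tendsto (fun t : ℝ => (t ^ p + 1) * (p * (t - 1) / (t ^ p - 1)) ^ 2)
        (nhdsWithin 0 (Set.Ioi 0))
        (nhds (((0:ℝ) ^ p + 1) * (p * ((0:ℝ) - 1) / ((0:ℝ) ^ p - 1)) ^ 2)) :=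
      (hg.continuousWithinAt (s := Set.Ioi (0:ℝ))).tendsto
    have hgval : ((0:ℝ) ^ p + 1) * (p * ((0:ℝ) - 1) / ((0:ℝ) ^ p - 1)) ^ 2 = p ^ 2 := by
      rw [h0p]; norm_num
    rw [hgval] at hg'
    refine hg'.congr' ?_
    filter_upwards [Ioo_mem_nhdsGT_of_mem (by norm_num : (0:ℝ) ∈ Set.Ico 0 1)] with t ht
    simp [hf, ne_of_lt ht.2]
  -- the witness point t0, with t0^(p-1) ≤ 1/4
  set t0 : ℝ := min (1/2) ((1/4 : ℝ) ^ (1/(p-1))) with ht0def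
  have hp1 : (0:ℝ) < p - 1 := by linarith
  have hc : (0:ℝ) < (1/4 : ℝ) ^ (1/(p-1)) := Real.rpow_pos_of_pos (by norm_num) _
  have ht0pos : 0 < t0 := lt_min (by norm_num) hc
  have ht0half : t0 ≤ 1/2 := min_le_left _ _
  have ht0lt1 : t0 < 1 := lt_of_le_of_lt ht0half (by norm_num)
  have ht0ne1 : t0 ≠ 1 := ne_of_lt ht0lt1
  have hkey : t0 ^ (p - 1) ≤ 1/4 := by
    have h1 : t0 ^ (p - 1) ≤ ((1/4 : ℝ) ^ (1/(p-1))) ^ (p - 1) :=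
      Real.rpow_le_rpow ht0pos.le (min_le_right _ _) hp1.le
    have h2 : ((1/4 : ℝ) ^ (1/(p-1))) ^ (p - 1) = 1/4 := by
      rw [← Real.rpow_mul (by norm_num : (0:ℝ) ≤ 1/4),
        one_div_mul_cancel (ne_of_gt hp1), Real.rpow_one]
    exact h1.trans_eq h2
  -- facts about x := t0^p
  have hxpos : 0 < t0 ^ p := Real.rpow_pos_of_pos ht0pos _
  have hsplit : t0 ^ p = t0 ^ (p - 1) * t0 := by
    have h3 := Real.rpow_add ht0pos (p - 1) 1
    rw [Real.rpow_one, show p - 1 + 1 = p by ring] at h3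
    exact h3
  have hxle : t0 ^ p ≤ t0 / 4 := by
    rw [hsplit]
    nlinarith [mul_le_mul_of_nonneg_right hkey ht0pos.le]
  -- f t0 < p²
  have hflt : f t0 < p ^ 2 := by
    have hxlt1 : t0 ^ p < 1 := by
      calc t0 ^ p ≤ t0 / 4 := hxle
        _ < 1 := by linarith
    set x := t0 ^ p with hx
    have hpoly : (x + 1) * (t0 - 1) ^ 2 < (x - 1) ^ 2 := by
      nlinarith [mul_pos hxpos ht0pos, sq_nonneg x, sq_nonneg t0,
        mul_le_mul_of_nonneg_right hxle (sq_nonneg t0), mul_pos (mul_pos hxpos ht0pos) ht0pos]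
    have hne : (0:ℝ) < (x - 1) ^ 2 := by
      nlinarith [mul_pos (sub_pos.2 hxlt1) (sub_pos.2 hxlt1)]
    have : (x + 1) * (p * (t0 - 1) / (x - 1)) ^ 2 < p ^ 2 := by
      rw [div_pow, mul_pow, ← mul_div_assoc, div_lt_iff₀ hne]
      nlinarith [sq_nonneg p, mul_pos (pow_pos hp0 2) (sub_pos.2 hpoly)]
    simpa [hf, if_neg ht0ne1] using this
  -- but monotonicity forces p² ≤ f t0
  have hle : p ^ 2 ≤ f t0 := by
    refine le_of_tendsto htend ?_
    filter_upwards [Ioo_mem_nhdsGT_of_mem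
      (Set.mem_Ico.2 ⟨le_refl (0:ℝ), ht0pos⟩)] with s hs
    exact h (Set.mem_Ioi.2 hs.1) (Set.mem_Ioi.2 ht0pos) hs.2.le
  linarith
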